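/- Suppose {(W_i, u_i)}_{i=1}^n are i.i.d., W_i is independent of u_i, and X = ι (the all-ones vector). Then under H_0: θ = θ_0, Z'ũ(θ_0) and Z'ũ_π(θ_0) are identically distributed for any fixed permutation π, where Z = M_ι W and ũ(θ_0) = M_ι(y − Yθ_0) = M_ι u; consequently the permutation test PAR_2 based on permuting the entries of the restricted residual vector is exact: E[φ_n^{PAR_2}] = α. -/

import Mathlib

open Finset Matrix MeasureTheory ProbabilityTheory

/-- Permutation AR statistic `PAR₂ = n m̂π' Σ̂π⁻¹ m̂π` built from demeaned instruments `Z`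
and (permuted) restricted residuals `ut`, with `m̂ = n⁻¹ Z'ut` and
`Σ̂ = n⁻¹ ∑ᵢ Zᵢ Zᵢ' utᵢ²`. -/
noncomputable def PAR2stat {n k : ℕ} (Z : Fin n → Fin k → ℝ) (ut : Fin n → ℝ) : ℝ :=
  let m : Fin k → ℝ := fun j => (n : ℝ)⁻¹ * ∑ i, Z i j * ut i
  let S : Matrix (Fin k) (Fin k) ℝ :=
    Matrix.of fun j l => (n : ℝ)⁻¹ * ∑ i, Z i j * Z i l * (ut i) ^ 2
  (n : ℝ) * (m ⬝ᵥ (S⁻¹).mulVec m)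

/-- The (possibly randomized) level-`α` randomization test, as in the standard
randomization-test construction. -/
noncomputable def randTest (n : ℕ) (α : ℝ) (vals : Equiv.Perm (Fin n) → ℝ)
    (obs : ℝ) : ℝ :=
  let N := Nat.factorial n
  let r : ℕ := N - (⌊(N : ℝ) * α⌋).toNat
  let t : ℝ := sInf {x : ℝ | r ≤ (Finset.univ.filter (fun π : Equiv.Perm (Fin n) => vals π ≤ x)).card}
  let Nplus : ℕ := (Finset.univ.filter (fun π : Equiv.Perm (Fin n) => t < vals π)).card
  let N0 : ℕ := (Finset.univ.filter (fun π : Equiv.Perm (Fin n) => vals π = t)).card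
  let a : ℝ := ((N : ℝ) * α - (Nplus : ℝ)) / (N0 : ℝ)
  if t < obs then 1 else if obs = t then a else 0

/-! ### Deterministic analysis of `randTest` -/

noncomputable def rTc (n : ℕ) (α : ℝ) : ℕ := Nat.factorial n - (⌊(Nat.factorial n : ℝ) * α⌋).toNat

noncomputable def Tval (n : ℕ) (α : ℝ) (vals : Equiv.Perm (Fin n) → ℝ) : ℝ :=
  sInf {x : ℝ | rTc n α ≤ (Finset.univ.filter (fun π : Equiv.Perm (Fin n) => vals π ≤ x)).card}

noncomputable def Aval (n : ℕ) (α : ℝ) (vals : Equiv.Perm (Fin n) → ℝ) : ℝ :=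
  ((Nat.factorial n : ℝ) * α
      - ((Finset.univ.filter (fun π : Equiv.Perm (Fin n) => Tval n α vals < vals π)).card : ℝ))
    / ((Finset.univ.filter (fun π : Equiv.Perm (Fin n) => vals π = Tval n α vals)).card : ℝ)

lemma randTest_eq (n : ℕ) (α : ℝ) (vals : Equiv.Perm (Fin n) → ℝ) (obs : ℝ) :
    randTest n α vals obs
      = if Tval n α vals < obs then 1 else if obs = Tval n α vals then Aval n α vals else 0 := rfl

lemma rTc_pos {n : ℕ} {α : ℝ} (hα : α < 1) : 1 ≤ rTc n α := by
  have hN : 0 < Nat.factorial n := Nat.factorial_pos n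
  have h1 : ((⌊(Nat.factorial n : ℝ) * α⌋).toNat : ℕ) < Nat.factorial n := by
    rw [Int.toNat_lt' (by omega)]
    rw [Int.floor_lt]
    push_cast
    calc (Nat.factorial n : ℝ) * α < (Nat.factorial n : ℝ) * 1 := by
          apply mul_lt_mul_of_pos_left hα
          exact_mod_cast hN
      _ = _ := by ring
  unfold rTc; omega

lemma rTc_le {n : ℕ} {α : ℝ} : rTc n α ≤ Nat.factorial n := Nat.sub_le _ _

/-- The least point of `{x | r ≤ #{g : v g ≤ x}}` is attained at some `g0`. -/
lemma exists_cnt_iff {G : Type*} [Fintype G] [Nonempty G] (v : G → ℝ) (r : ℕ)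
    (hr1 : 1 ≤ r) (hrN : r ≤ Fintype.card G) :
    ∃ g0 : G, ∀ x : ℝ,
      (r ≤ (Finset.univ.filter (fun g => v g ≤ x)).card ↔ v g0 ≤ x) := by
  classical
  obtain ⟨gmax, -, hmax⟩ := Finset.exists_max_image (Finset.univ : Finset G) v ⟨Classical.arbitrary G, Finset.mem_univ _⟩
  set T : Finset G := Finset.univ.filter (fun g => r ≤ (Finset.univ.filter (fun g' => v g' ≤ v g)).card) with hT
  have hTne : T.Nonempty := by
    refine ⟨gmax, ?_⟩
    simp only [hT, Finset.mem_filter, Finset.mem_univ, true_and]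
    have : (Finset.univ.filter (fun g' => v g' ≤ v gmax)) = Finset.univ := by
      apply Finset.filter_true_of_mem
      intro g _; exact hmax g (Finset.mem_univ g)
    rw [this, Finset.card_univ]
    exact hrN
  obtain ⟨g0, hg0T, hg0min⟩ := T.exists_min_image v hTne
  have hg0 : r ≤ (Finset.univ.filter (fun g' => v g' ≤ v g0)).card := by
    simpa [hT] using hg0T
  refine ⟨g0, fun x => ⟨?_, ?_⟩⟩
  · intro hx
    set F := Finset.univ.filter (fun g => v g ≤ x) with hF
    have hFne : F.Nonempty := Finset.card_pos.mp (lt_of_lt_of_le hr1 hx)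
    obtain ⟨g1, hg1F, hg1max⟩ := F.exists_max_image v hFne
    have hg1x : v g1 ≤ x := by simpa [hF] using hg1F
    have hsub : F ⊆ Finset.univ.filter (fun g' => v g' ≤ v g1) := by
      intro g hg
      simp only [Finset.mem_filter, Finset.mem_univ, true_and]
      exact hg1max g hg
    have hg1T : g1 ∈ T := by
      simp only [hT, Finset.mem_filter, Finset.mem_univ, true_and]
      exact le_trans hx (Finset.card_le_card hsub)
    exact le_trans (hg0min g1 hg1T) hg1x
  · intro hx
    refine le_trans hg0 (Finset.card_le_card ?_)
    intro g hg
    simp only [Finset.mem_filter, Finset.mem_univ, true_and] at hg ⊢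
    exact le_trans hg hx

lemma Tval_spec {n : ℕ} {α : ℝ} (hα : α < 1) (vals : Equiv.Perm (Fin n) → ℝ) :
    ∃ g0 : Equiv.Perm (Fin n), Tval n α vals = vals g0 ∧ ∀ x : ℝ,
      (rTc n α ≤ (Finset.univ.filter (fun π => vals π ≤ x)).card ↔ vals g0 ≤ x) := by
  obtain ⟨g0, hg0⟩ := exists_cnt_iff vals (rTc n α) (rTc_pos hα)
    (by rw [Fintype.card_perm, Fintype.card_fin]; exact rTc_le)
  refine ⟨g0, ?_, hg0⟩
  have : {x : ℝ | rTc n α ≤ (Finset.univ.filter (fun π => vals π ≤ x)).card} = Set.Ici (vals g0) := by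
    ext x; simpa using hg0 x
  rw [Tval, this, csInf_Ici]

lemma Tval_le_iff {n : ℕ} {α : ℝ} (hα : α < 1) (vals : Equiv.Perm (Fin n) → ℝ) (c : ℝ) :
    Tval n α vals ≤ c ↔ rTc n α ≤ (Finset.univ.filter (fun π => vals π ≤ c)).card := by
  obtain ⟨g0, hg0eq, hg0⟩ := Tval_spec hα vals
  rw [hg0eq, hg0 c]

lemma Tval_mem {n : ℕ} {α : ℝ} (hα : α < 1) (vals : Equiv.Perm (Fin n) → ℝ) :
    ∃ g0, vals g0 = Tval n α vals := by
  obtain ⟨g0, hg0eq, -⟩ := Tval_spec hα vals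
  exact ⟨g0, hg0eq.symm⟩

lemma card_filter_mulLeft {n : ℕ} (σ : Equiv.Perm (Fin n)) (q : Equiv.Perm (Fin n) → Prop)
    [DecidablePred q] :
    (Finset.univ.filter (fun π => q (σ * π))).card = (Finset.univ.filter q).card := by
  apply Finset.card_bij (fun π _ => σ * π)
  · intro a ha; simp only [Finset.mem_filter, Finset.mem_univ, true_and] at ha ⊢; exact ha
  · intro a _ b _ hab; exact mul_left_cancel hab
  · intro b hb
    refine ⟨σ⁻¹ * b, ?_, ?_⟩
    · simp only [Finset.mem_filter, Finset.mem_univ, true_and] at hb ⊢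
      simpa [← mul_assoc] using hb
    · simp [← mul_assoc]

lemma Tval_mulLeft {n : ℕ} (α : ℝ) (v : Equiv.Perm (Fin n) → ℝ) (σ : Equiv.Perm (Fin n)) :
    Tval n α (fun π => v (σ * π)) = Tval n α v := by
  unfold Tval
  congr 1
  ext x
  simp only [Set.mem_setOf_eq]
  rw [show (Finset.univ.filter (fun π => (fun π' => v (σ * π')) π ≤ x)).card
      = (Finset.univ.filter (fun π => v (σ * π) ≤ x)).card from rfl,
    card_filter_mulLeft σ (fun g => v g ≤ x)]

lemma Aval_mulLeft {n : ℕ} (α : ℝ) (v : Equiv.Perm (Fin n) → ℝ) (σ : Equiv.Perm (Fin n)) :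
    Aval n α (fun π => v (σ * π)) = Aval n α v := by
  unfold Aval
  rw [Tval_mulLeft α v σ, card_filter_mulLeft σ (fun g => Tval n α v < v g),
    card_filter_mulLeft σ (fun g => v g = Tval n α v)]

lemma sum_randTest {n : ℕ} {α : ℝ} (hα : α ∈ Set.Ioo (0 : ℝ) 1) (v : Equiv.Perm (Fin n) → ℝ) :
    ∑ σ : Equiv.Perm (Fin n), randTest n α (fun π => v (σ * π)) (v σ)
      = (Nat.factorial n : ℝ) * α := by
  classical
  set t := Tval n α v with ht
  set a := Aval n α v with ha
  have hterm : ∀ σ : Equiv.Perm (Fin n),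
      randTest n α (fun π => v (σ * π)) (v σ)
        = (if t < v σ then (1:ℝ) else 0) + (if v σ = t then a else 0) := by
    intro σ
    rw [randTest_eq, Tval_mulLeft α v σ, Aval_mulLeft α v σ, ← ht, ← ha]
    by_cases h1 : t < v σ
    · have h2 : v σ ≠ t := ne_of_gt h1
      simp [h1, h2]
    · by_cases h2 : v σ = t
      · simp [h1, h2]
      · simp [h1, h2]
  rw [Finset.sum_congr rfl (fun σ _ => hterm σ), Finset.sum_add_distrib]
  have h2 : ∀ σ : Equiv.Perm (Fin n), (if v σ = t then a else 0) = a * (if v σ = t then (1:ℝ) else 0) := by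
    intro σ; split_ifs <;> ring
  rw [Finset.sum_congr rfl (fun σ _ => h2 σ), ← Finset.mul_sum, Finset.sum_boole, Finset.sum_boole]
  have hN0 : (0:ℝ) < ((Finset.univ.filter (fun σ : Equiv.Perm (Fin n) => v σ = t)).card : ℝ) := by
    obtain ⟨g0, hg0⟩ := Tval_mem hα.2 v
    have : g0 ∈ Finset.univ.filter (fun σ : Equiv.Perm (Fin n) => v σ = t) := by
      simp [hg0, ht]
    exact_mod_cast Finset.card_pos.mpr ⟨g0, this⟩
  have ha' : a * ((Finset.univ.filter (fun σ : Equiv.Perm (Fin n) => v σ = t)).card : ℝ)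
      = (Nat.factorial n : ℝ) * α
        - ((Finset.univ.filter (fun σ : Equiv.Perm (Fin n) => t < v σ)).card : ℝ) := by
    rw [ha, Aval, ← ht]
    exact div_mul_cancel₀ _ (ne_of_gt hN0)
  rw [ha']
  ring

/-! ### Measurability -/

lemma measurable_matrix_det {X ι : Type*} [MeasurableSpace X] [Fintype ι] [DecidableEq ι]
    {M : X → Matrix ι ι ℝ} (h : ∀ i j, Measurable fun x => M x i j) :
    Measurable fun x => (M x).det := by
  simp_rw [Matrix.det_apply']
  exact Finset.measurable_sum _ fun σ _ =>
    (Finset.measurable_prod _ fun i _ => h (σ i) i).const_mul _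

lemma measurable_matrix_inv {X ι : Type*} [MeasurableSpace X] [Fintype ι] [DecidableEq ι]
    {M : X → Matrix ι ι ℝ} (h : ∀ i j, Measurable fun x => M x i j) (i j : ι) :
    Measurable fun x => (M x)⁻¹ i j := by
  simp_rw [Matrix.inv_def, Matrix.smul_apply, Matrix.adjugate_apply, Ring.inverse_eq_inv',
    smul_eq_mul]
  refine ((measurable_matrix_det h).inv).mul (measurable_matrix_det fun a b => ?_)
  by_cases hab : a = j <;> simp [Matrix.updateRow_apply, hab] <;> exact h a b

lemma measurable_PAR2stat {X : Type*} [MeasurableSpace X] {n k : ℕ}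
    {Z : X → Fin n → Fin k → ℝ} {ut : X → Fin n → ℝ}
    (hZ : ∀ i j, Measurable fun x => Z x i j) (hu : ∀ i, Measurable fun x => ut x i) :
    Measurable fun x => PAR2stat (Z x) (ut x) := by
  have hm : ∀ j, Measurable fun x => (n : ℝ)⁻¹ * ∑ i, Z x i j * ut x i := fun j =>
    (Finset.measurable_sum _ fun i _ => (hZ i j).mul (hu i)).const_mul _
  have hS : ∀ j l, Measurable fun x =>
      (Matrix.of fun j l => (n : ℝ)⁻¹ * ∑ i, Z x i j * Z x i l * (ut x i) ^ 2) j l := by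
    intro j l
    simp only [Matrix.of_apply]
    exact (Finset.measurable_sum _ fun i _ =>
      (((hZ i j).mul (hZ i l)).mul ((hu i).pow measurable_const))).const_mul _
  have hSi := measurable_matrix_inv hS
  show Measurable fun x => (n : ℝ) *
    ((fun j => (n : ℝ)⁻¹ * ∑ i, Z x i j * ut x i) ⬝ᵥ
      ((Matrix.of fun j l => (n : ℝ)⁻¹ * ∑ i, Z x i j * Z x i l * (ut x i) ^ 2)⁻¹).mulVec
        (fun j => (n : ℝ)⁻¹ * ∑ i, Z x i j * ut x i))
  simp_rw [dotProduct, Matrix.mulVec, dotProduct]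
  exact (Finset.measurable_sum _ fun j _ => (hm j).mul
    (Finset.measurable_sum _ fun l _ => (hSi j l).mul (hm l))).const_mul _

lemma measurable_Tval {X : Type*} [MeasurableSpace X] {n : ℕ} {α : ℝ} (hα : α < 1)
    {vals : X → Equiv.Perm (Fin n) → ℝ} (h : ∀ π, Measurable fun x => vals x π) :
    Measurable fun x => Tval n α (vals x) := by
  apply measurable_of_Iic
  intro c
  have heq : (fun x => Tval n α (vals x)) ⁻¹' Set.Iic c
      = {x | rTc n α ≤ (Finset.univ.filter (fun π => vals x π ≤ c)).card} := by
    ext x; simp [Set.mem_Iic, Tval_le_iff hα]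
  rw [heq]
  have hcard : Measurable fun x => (Finset.univ.filter (fun π => vals x π ≤ c)).card := by
    simp_rw [Finset.card_filter]
    exact Finset.measurable_sum _ fun π _ =>
      Measurable.ite (measurableSet_le (h π) measurable_const) measurable_const measurable_const
  exact hcard (show MeasurableSet (Set.Ici (rTc n α)) from trivial)

lemma measurable_randTest {X : Type*} [MeasurableSpace X] {n : ℕ} {α : ℝ} (hα : α < 1)
    {vals : X → Equiv.Perm (Fin n) → ℝ} {obs : X → ℝ}
    (h : ∀ π, Measurable fun x => vals x π) (hobs : Measurable obs) :
    Measurable fun x => randTest n α (vals x) (obs x) := by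
  simp_rw [randTest_eq]
  have hT : Measurable fun x => Tval n α (vals x) := measurable_Tval hα h
  have hcast : Measurable fun m : ℕ => (m : ℝ) := measurable_from_top
  have hNp : Measurable fun x =>
      (((Finset.univ.filter (fun π => Tval n α (vals x) < vals x π)).card : ℕ) : ℝ) := by
    apply hcast.comp
    simp_rw [Finset.card_filter]
    exact Finset.measurable_sum _ fun π _ =>
      Measurable.ite (measurableSet_lt hT (h π)) measurable_const measurable_const
  have hN0 : Measurable fun x =>
      (((Finset.univ.filter (fun π => vals x π = Tval n α (vals x))).card : ℕ) : ℝ) := by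
    apply hcast.comp
    simp_rw [Finset.card_filter]
    exact Finset.measurable_sum _ fun π _ =>
      Measurable.ite (measurableSet_eq_fun (h π) hT) measurable_const measurable_const
  have hA : Measurable fun x => Aval n α (vals x) := by
    unfold Aval
    exact (measurable_const.sub hNp).div hN0
  exact Measurable.ite (measurableSet_lt hT hobs) measurable_const
    (Measurable.ite (measurableSet_eq_fun hobs hT) hA measurable_const)

lemma abs_Aval_le {n : ℕ} {α : ℝ} (vals : Equiv.Perm (Fin n) → ℝ) :
    |Aval n α vals| ≤ (Nat.factorial n : ℝ) * |α| + (Nat.factorial n : ℝ) := by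
  unfold Aval
  by_cases hc : (((Finset.univ.filter
      (fun π : Equiv.Perm (Fin n) => vals π = Tval n α vals)).card : ℕ) : ℝ) = 0
  · rw [hc, div_zero, abs_zero]; positivity
  · have hc1 : (1 : ℝ) ≤ (((Finset.univ.filter
        (fun π : Equiv.Perm (Fin n) => vals π = Tval n α vals)).card : ℕ) : ℝ) := by
      have : (Finset.univ.filter
          (fun π : Equiv.Perm (Fin n) => vals π = Tval n α vals)).card ≠ 0 := by
        exact_mod_cast hc
      exact_mod_cast Nat.one_le_iff_ne_zero.mpr this
    have hNp : (((Finset.univ.filter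
        (fun π : Equiv.Perm (Fin n) => Tval n α vals < vals π)).card : ℕ) : ℝ)
        ≤ (Nat.factorial n : ℝ) := by
      have h1 : (Finset.univ.filter
          (fun π : Equiv.Perm (Fin n) => Tval n α vals < vals π)).card ≤ Nat.factorial n := by
        calc _ ≤ (Finset.univ : Finset (Equiv.Perm (Fin n))).card := Finset.card_filter_le _ _
          _ = Nat.factorial n := by rw [Finset.card_univ, Fintype.card_perm, Fintype.card_fin]
      exact_mod_cast h1
    calc |_ / _| ≤ |(Nat.factorial n : ℝ) * α - _| := by
          rw [abs_div]
          exact div_le_self (abs_nonneg _) (le_trans hc1 (le_abs_self _))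
      _ ≤ |(Nat.factorial n : ℝ) * α| + |(((Finset.univ.filter
            (fun π : Equiv.Perm (Fin n) => Tval n α vals < vals π)).card : ℕ) : ℝ)| :=
          abs_sub _ _
      _ ≤ (Nat.factorial n : ℝ) * |α| + (Nat.factorial n : ℝ) := by
          rw [abs_mul, abs_of_nonneg (by positivity : (0:ℝ) ≤ (Nat.factorial n : ℝ)),
            abs_of_nonneg (by positivity : (0:ℝ) ≤ (((Finset.univ.filter
              (fun π : Equiv.Perm (Fin n) => Tval n α vals < vals π)).card : ℕ) : ℝ))]
          exact add_le_add le_rfl hNp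

lemma abs_randTest_le (n : ℕ) (α : ℝ) (vals : Equiv.Perm (Fin n) → ℝ) (obs : ℝ) :
    |randTest n α vals obs| ≤ 1 + ((Nat.factorial n : ℝ) * |α| + (Nat.factorial n : ℝ)) := by
  have h0 : (0:ℝ) ≤ (Nat.factorial n : ℝ) * |α| + (Nat.factorial n : ℝ) := by positivity
  rw [randTest_eq]
  split_ifs
  · rw [abs_one]; linarith
  · have := abs_Aval_le (α := α) vals; linarith
  · rw [abs_zero]; linarith

/-! ### Distribution facts -/

lemma iIndepFun_map_eq_pi {Ω : Type*} [MeasurableSpace Ω] {P : Measure Ω}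
    [IsProbabilityMeasure P] {ι : Type*} [Fintype ι] {β : ι → Type*}
    [mβ : ∀ i, MeasurableSpace (β i)] {f : ∀ i, Ω → β i} (hf : ∀ i, Measurable (f i))
    (h : iIndepFun f P) :
    P.map (fun ω i => f i ω) = Measure.pi (fun i => P.map (f i)) := by
  haveI : ∀ i, IsProbabilityMeasure (P.map (f i)) :=
    fun i => Measure.isProbabilityMeasure_map (hf i).aemeasurable
  refine (Measure.pi_eq (μ := fun i => P.map (f i)) fun s hs => ?_).symm
  rw [Measure.map_apply (measurable_pi_lambda _ hf) (MeasurableSet.univ_pi hs)]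
  have hpre : (fun ω i => f i ω) ⁻¹' Set.univ.pi s = ⋂ i, f i ⁻¹' s i := by
    ext ω; simp [Set.mem_univ_pi]
  rw [hpre, h.meas_iInter (fun i => ⟨s i, hs i, rfl⟩)]
  exact Finset.prod_congr rfl fun i _ => (Measure.map_apply (hf i) (hs i)).symm

lemma map_pairShuffle {n : ℕ} {A B : Type*} [MeasurableSpace A] [MeasurableSpace B]
    (ν : Measure A) (ρ : Measure B) [IsProbabilityMeasure ν] [IsProbabilityMeasure ρ]
    (σ : Equiv.Perm (Fin n)) :
    Measure.map (fun f : Fin n → A × B => fun i => ((f i).1, (f (σ i)).2))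
        (Measure.pi fun _ : Fin n => ν.prod ρ)
      = Measure.pi fun _ : Fin n => ν.prod ρ := by
  have hmp : Measurable (fun b : Fin n → B => fun i => b (σ i)) :=
    measurable_pi_lambda _ fun i => measurable_pi_apply (σ i)
  have hperm : Measure.map (fun b : Fin n → B => fun i => b (σ i)) (Measure.pi fun _ : Fin n => ρ)
      = Measure.pi fun _ : Fin n => ρ := by
    refine (Measure.pi_eq (μ := fun _ : Fin n => ρ) fun s hs => ?_).symm
    rw [Measure.map_apply hmp (MeasurableSet.univ_pi hs)]
    have hpre : (fun b : Fin n → B => fun i => b (σ i)) ⁻¹' Set.univ.pi s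
        = Set.univ.pi (fun j => s (σ.symm j)) := by
      ext b
      simp only [Set.mem_preimage, Set.mem_univ_pi]
      constructor
      · intro h j; simpa using h (σ.symm j)
      · intro h i; simpa using h (σ i)
    rw [hpre, Measure.pi_pi]
    exact Equiv.prod_comp σ.symm fun i => ρ (s i)
  set E := MeasurableEquiv.arrowProdEquivProdArrow A B (Fin n) with hEdef
  have hE := measurePreserving_arrowProdEquivProdArrow A B (Fin n) (fun _ => ν) (fun _ => ρ)
  have hcomp : (fun f : Fin n → A × B => fun i => ((f i).1, (f (σ i)).2))
      = ⇑E.symm ∘ (Prod.map id (fun b : Fin n → B => fun i => b (σ i)) ∘ ⇑E) := by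
    funext f
    simp [hEdef, MeasurableEquiv.arrowProdEquivProdArrow, Equiv.arrowProdEquivProdArrow, Prod.map]
  rw [hcomp,
    ← Measure.map_map E.symm.measurable ((measurable_id.prodMap hmp).comp E.measurable),
    ← Measure.map_map (measurable_id.prodMap hmp) E.measurable, hE.map_eq,
    ← Measure.map_prod_map _ _ measurable_id hmp, Measure.map_id, hperm,
    ← hE.map_eq, Measure.map_map E.symm.measurable E.measurable]
  simp

/-! ### The test statistic functional -/

noncomputable def PhiStat (n k : ℕ) (α : ℝ)
    (p : (Fin n → Fin k → ℝ) × (Fin n → ℝ)) : ℝ :=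
  randTest n α
    (fun π => PAR2stat (fun i j => p.1 i j - (n : ℝ)⁻¹ * ∑ l, p.1 l j)
      (fun i => p.2 (π i) - (n : ℝ)⁻¹ * ∑ l, p.2 l))
    (PAR2stat (fun i j => p.1 i j - (n : ℝ)⁻¹ * ∑ l, p.1 l j)
      (fun i => p.2 i - (n : ℝ)⁻¹ * ∑ l, p.2 l))

set_option maxHeartbeats 1000000 in
lemma measurable_PhiStat {n k : ℕ} {α : ℝ} (hα1 : α < 1) :
    Measurable (PhiStat n k α) := by
  unfold PhiStat
  have hZmeas : ∀ i j, Measurable fun p : (Fin n → Fin k → ℝ) × (Fin n → ℝ) =>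
      p.1 i j - (n : ℝ)⁻¹ * ∑ l, p.1 l j := by
    intro i j
    exact ((measurable_pi_apply j).comp ((measurable_pi_apply i).comp measurable_fst)).sub
      ((Finset.measurable_sum _ fun l _ =>
        (measurable_pi_apply j).comp ((measurable_pi_apply l).comp measurable_fst)).const_mul _)
  have humean : Measurable fun p : (Fin n → Fin k → ℝ) × (Fin n → ℝ) => ∑ l, p.2 l :=
    Finset.measurable_sum _ fun l _ => (measurable_pi_apply l).comp measurable_snd
  refine measurable_randTest (X := (Fin n → Fin k → ℝ) × (Fin n → ℝ)) hα1
    (vals := fun p π => PAR2stat (fun i j => p.1 i j - (n : ℝ)⁻¹ * ∑ l, p.1 l j)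
      (fun i => p.2 (π i) - (n : ℝ)⁻¹ * ∑ l, p.2 l))
    (obs := fun p => PAR2stat (fun i j => p.1 i j - (n : ℝ)⁻¹ * ∑ l, p.1 l j)
      (fun i => p.2 i - (n : ℝ)⁻¹ * ∑ l, p.2 l)) ?_ ?_
  · intro π
    exact measurable_PAR2stat hZmeas fun i =>
      ((measurable_pi_apply (π i)).comp measurable_snd).sub (humean.const_mul _)
  · exact measurable_PAR2stat hZmeas fun i =>
      ((measurable_pi_apply i).comp measurable_snd).sub (humean.const_mul _)

lemma abs_PhiStat_le {n k : ℕ} (α : ℝ) (p : (Fin n → Fin k → ℝ) × (Fin n → ℝ)) :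
    |PhiStat n k α p| ≤ 1 + ((Nat.factorial n : ℝ) * |α| + (Nat.factorial n : ℝ)) :=
  abs_randTest_le n α _ _

lemma PhiStat_perm {n k : ℕ} (α : ℝ) (w : Fin n → Fin k → ℝ) (x : Fin n → ℝ)
    (σ : Equiv.Perm (Fin n)) :
    PhiStat n k α (w, x ∘ σ) = randTest n α
      (fun π => PAR2stat (fun i j => w i j - (n : ℝ)⁻¹ * ∑ l, w l j)
        (fun i => x ((σ * π) i) - (n : ℝ)⁻¹ * ∑ l, x l))
      (PAR2stat (fun i j => w i j - (n : ℝ)⁻¹ * ∑ l, w l j)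
        (fun i => x (σ i) - (n : ℝ)⁻¹ * ∑ l, x l)) := by
  unfold PhiStat
  have hs' : ∑ l, x (σ l) = ∑ l, x l := Equiv.sum_comp σ x
  simp only [Function.comp_apply, Equiv.Perm.mul_apply, hs']

/-- Exactness of the `PAR₂` test when `X = ι`: if `(Wᵢ, uᵢ)` are i.i.d. with `Wᵢ`
independent of `uᵢ`, then under the null `Z'ũ` and `Z'ũ_π` are identically distributed
(`Z = M_ι W`, `ũ = M_ι u`), and the randomization test based on permuting the entries of
the restricted residual vector has exact size `α`. -/
theorem stmt5 {Ω : Type*} [MeasurableSpace Ω] (P : Measure Ω) [IsProbabilityMeasure P]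
    (n k : ℕ) (hn : 0 < n)
    (W : Ω → Fin n → Fin k → ℝ) (u : Ω → Fin n → ℝ)
    (hWmeas : Measurable W) (humeas : Measurable u)
    (hid : ∀ i j : Fin n,
      IdentDistrib (fun ω => (W ω i, u ω i)) (fun ω => (W ω j, u ω j)) P P)
    (hiind : iIndepFun (fun i ω => (W ω i, u ω i)) P)
    (hWu : ∀ i : Fin n, IndepFun (fun ω => W ω i) (fun ω => u ω i) P)
    (α : ℝ) (hα : α ∈ Set.Ioo (0 : ℝ) 1) :
    (∀ π : Equiv.Perm (Fin n),
        Measure.map (fun ω => fun j : Fin k =>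
            ∑ i, (W ω i j - (n : ℝ)⁻¹ * ∑ l, W ω l j)
              * (u ω (π i) - (n : ℝ)⁻¹ * ∑ l, u ω l)) P
          = Measure.map (fun ω => fun j : Fin k =>
              ∑ i, (W ω i j - (n : ℝ)⁻¹ * ∑ l, W ω l j)
                * (u ω i - (n : ℝ)⁻¹ * ∑ l, u ω l)) P)
    ∧ ∫ ω, randTest n α
          (fun π => PAR2stat (fun i j => W ω i j - (n : ℝ)⁻¹ * ∑ l, W ω l j)
            (fun i => u ω (π i) - (n : ℝ)⁻¹ * ∑ l, u ω l))
          (PAR2stat (fun i j => W ω i j - (n : ℝ)⁻¹ * ∑ l, W ω l j)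
            (fun i => u ω i - (n : ℝ)⁻¹ * ∑ l, u ω l)) ∂P = α := by
  classical
  obtain ⟨hα0, hα1⟩ := hα
  set i0 : Fin n := ⟨0, hn⟩ with hi0
  have hWi : ∀ i : Fin n, Measurable fun ω => W ω i :=
    fun i => (measurable_pi_apply i).comp hWmeas
  have hui : ∀ i : Fin n, Measurable fun ω => u ω i :=
    fun i => (measurable_pi_apply i).comp humeas
  set ν : Measure (Fin k → ℝ) := P.map (fun ω => W ω i0) with hνdef
  set ρ : Measure ℝ := P.map (fun ω => u ω i0) with hρdef
  haveI : IsProbabilityMeasure ν := Measure.isProbabilityMeasure_map (hWi i0).aemeasurable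
  haveI : IsProbabilityMeasure ρ := Measure.isProbabilityMeasure_map (hui i0).aemeasurable
  have hpairmeas : ∀ i : Fin n, Measurable fun ω => (W ω i, u ω i) :=
    fun i => (hWi i).prodMk (hui i)
  have hVi : ∀ i : Fin n, P.map (fun ω => (W ω i, u ω i)) = ν.prod ρ := by
    intro i
    rw [(hid i i0).map_eq]
    exact (indepFun_iff_map_prod_eq_prod_map_map
      (hWi i0).aemeasurable (hui i0).aemeasurable).mp (hWu i0)
  have hVmeas : Measurable (fun ω => fun i : Fin n => (W ω i, u ω i)) :=
    measurable_pi_lambda _ hpairmeas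
  have hV : P.map (fun ω => fun i : Fin n => (W ω i, u ω i))
      = Measure.pi (fun _ : Fin n => ν.prod ρ) := by
    rw [iIndepFun_map_eq_pi hpairmeas hiind]
    exact congrArg Measure.pi (funext hVi)
  have hVσmeas : ∀ σ : Equiv.Perm (Fin n),
      Measurable (fun ω => fun i : Fin n => (W ω i, u ω (σ i))) :=
    fun σ => measurable_pi_lambda _ fun i => (hWi i).prodMk (hui (σ i))
  have hVσ : ∀ σ : Equiv.Perm (Fin n),
      P.map (fun ω => fun i : Fin n => (W ω i, u ω (σ i)))
        = Measure.pi (fun _ : Fin n => ν.prod ρ) := by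
    intro σ
    have hg : Measurable (fun f : Fin n → (Fin k → ℝ) × ℝ => fun i => ((f i).1, (f (σ i)).2)) :=
      measurable_pi_lambda _ fun i =>
        ((measurable_fst.comp (measurable_pi_apply i)).prodMk
          (measurable_snd.comp (measurable_pi_apply (σ i))))
    have hco : (fun ω => fun i : Fin n => (W ω i, u ω (σ i)))
        = (fun f : Fin n → (Fin k → ℝ) × ℝ => fun i => ((f i).1, (f (σ i)).2))
          ∘ (fun ω => fun i => (W ω i, u ω i)) := rfl
    rw [hco, ← Measure.map_map hg hVmeas, hV, map_pairShuffle]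
  have hpairσmeas : ∀ σ : Equiv.Perm (Fin n), Measurable (fun ω => (W ω, u ω ∘ σ)) :=
    fun σ => hWmeas.prodMk (measurable_pi_lambda _ fun i => hui (σ i))
  have hpair1meas : Measurable (fun ω => (W ω, u ω)) := hWmeas.prodMk humeas
  have hsplit : Measurable (fun f : Fin n → (Fin k → ℝ) × ℝ =>
      ((fun i => (f i).1), (fun i => (f i).2))) :=
    (measurable_pi_lambda _ fun i => measurable_fst.comp (measurable_pi_apply i)).prodMk
      (measurable_pi_lambda _ fun i => measurable_snd.comp (measurable_pi_apply i))
  have hmap : ∀ σ : Equiv.Perm (Fin n),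
      P.map (fun ω => (W ω, u ω ∘ σ)) = P.map (fun ω => (W ω, u ω)) := by
    intro σ
    have h1 : (fun ω => (W ω, u ω ∘ σ))
        = (fun f : Fin n → (Fin k → ℝ) × ℝ => ((fun i => (f i).1), (fun i => (f i).2)))
          ∘ (fun ω => fun i : Fin n => (W ω i, u ω (σ i))) := rfl
    have h2 : (fun ω => (W ω, u ω))
        = (fun f : Fin n → (Fin k → ℝ) × ℝ => ((fun i => (f i).1), (fun i => (f i).2)))
          ∘ (fun ω => fun i : Fin n => (W ω i, u ω i)) := rfl
    rw [h1, h2, ← Measure.map_map hsplit (hVσmeas σ), ← Measure.map_map hsplit hVmeas,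
      hVσ σ, hV]
  constructor
  · -- identical distribution of the permuted statistics
    intro π
    set G : (Fin n → Fin k → ℝ) × (Fin n → ℝ) → (Fin k → ℝ) := fun p => fun j =>
      ∑ i, (p.1 i j - (n : ℝ)⁻¹ * ∑ l, p.1 l j) * (p.2 i - (n : ℝ)⁻¹ * ∑ l, p.2 l) with hGdef
    have hGmeas : Measurable G := by
      apply measurable_pi_lambda
      intro j
      apply Finset.measurable_sum
      intro i _
      have hW1 : Measurable fun p : (Fin n → Fin k → ℝ) × (Fin n → ℝ) => p.1 i j :=
        (measurable_pi_apply j).comp ((measurable_pi_apply i).comp measurable_fst)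
      have hW2 : Measurable fun p : (Fin n → Fin k → ℝ) × (Fin n → ℝ) => ∑ l, p.1 l j :=
        Finset.measurable_sum _ fun l _ =>
          (measurable_pi_apply j).comp ((measurable_pi_apply l).comp measurable_fst)
      have hu1 : Measurable fun p : (Fin n → Fin k → ℝ) × (Fin n → ℝ) => p.2 i :=
        (measurable_pi_apply i).comp measurable_snd
      have hu2 : Measurable fun p : (Fin n → Fin k → ℝ) × (Fin n → ℝ) => ∑ l, p.2 l :=
        Finset.measurable_sum _ fun l _ => (measurable_pi_apply l).comp measurable_snd
      exact (hW1.sub (hW2.const_mul _)).mul (hu1.sub (hu2.const_mul _))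
    have hl : (fun ω => fun j : Fin k =>
        ∑ i, (W ω i j - (n : ℝ)⁻¹ * ∑ l, W ω l j)
          * (u ω (π i) - (n : ℝ)⁻¹ * ∑ l, u ω l))
        = G ∘ (fun ω => (W ω, u ω ∘ π)) := by
      funext ω
      simp only [hGdef, Function.comp_apply]
      funext j
      refine Finset.sum_congr rfl fun i _ => ?_
      rw [Equiv.sum_comp π (u ω)]
    have hr : (fun ω => fun j : Fin k =>
        ∑ i, (W ω i j - (n : ℝ)⁻¹ * ∑ l, W ω l j)
          * (u ω i - (n : ℝ)⁻¹ * ∑ l, u ω l))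
        = G ∘ (fun ω => (W ω, u ω)) := rfl
    rw [hl, hr, ← Measure.map_map hGmeas (hpairσmeas π), ← Measure.map_map hGmeas hpair1meas,
      hmap π]
  · -- exactness of the randomization test
    have hΦmeas : Measurable (PhiStat n k α) := measurable_PhiStat hα1
    have hv : ∀ (σ : Equiv.Perm (Fin n)) (ω : Ω), PhiStat n k α (W ω, u ω ∘ σ)
        = randTest n α
            (fun π => PAR2stat (fun i j => W ω i j - (n : ℝ)⁻¹ * ∑ l, W ω l j)
              (fun i => u ω ((σ * π) i) - (n : ℝ)⁻¹ * ∑ l, u ω l))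
            (PAR2stat (fun i j => W ω i j - (n : ℝ)⁻¹ * ∑ l, W ω l j)
              (fun i => u ω (σ i) - (n : ℝ)⁻¹ * ∑ l, u ω l)) :=
      fun σ ω => PhiStat_perm α (W ω) (u ω) σ
    have hsum : ∀ ω, ∑ σ : Equiv.Perm (Fin n), PhiStat n k α (W ω, u ω ∘ σ)
        = (Nat.factorial n : ℝ) * α := by
      intro ω
      rw [Finset.sum_congr rfl fun σ _ => hv σ ω]
      exact sum_randTest ⟨hα0, hα1⟩
        (fun τ => PAR2stat (fun i j => W ω i j - (n : ℝ)⁻¹ * ∑ l, W ω l j)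
          (fun i => u ω (τ i) - (n : ℝ)⁻¹ * ∑ l, u ω l))
    have hφmeas : ∀ σ : Equiv.Perm (Fin n), Measurable fun ω => PhiStat n k α (W ω, u ω ∘ σ) :=
      fun σ => hΦmeas.comp (hpairσmeas σ)
    have hφint : ∀ σ : Equiv.Perm (Fin n),
        Integrable (fun ω => PhiStat n k α (W ω, u ω ∘ σ)) P := by
      intro σ
      refine (integrable_const (1 + ((Nat.factorial n : ℝ) * |α| + (Nat.factorial n : ℝ)))).mono'
        ((hφmeas σ).aestronglyMeasurable) (ae_of_all _ fun ω => ?_)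
      rw [Real.norm_eq_abs]
      exact abs_PhiStat_le α _
    have hkey : ∀ σ : Equiv.Perm (Fin n),
        ∫ ω, PhiStat n k α (W ω, u ω ∘ σ) ∂P = ∫ ω, PhiStat n k α (W ω, u ω) ∂P := by
      intro σ
      rw [← integral_map (hpairσmeas σ).aemeasurable hΦmeas.aestronglyMeasurable, hmap σ,
        integral_map hpair1meas.aemeasurable hΦmeas.aestronglyMeasurable]
    have hfac : (Nat.factorial n : ℝ) ≠ 0 :=
      Nat.cast_ne_zero.mpr (Nat.factorial_ne_zero n)
    have hNα : (Nat.factorial n : ℝ) * ∫ ω, PhiStat n k α (W ω, u ω) ∂P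
        = (Nat.factorial n : ℝ) * α := by
      calc (Nat.factorial n : ℝ) * ∫ ω, PhiStat n k α (W ω, u ω) ∂P
          = ∑ _σ : Equiv.Perm (Fin n), ∫ ω, PhiStat n k α (W ω, u ω) ∂P := by
            rw [Finset.sum_const, Finset.card_univ, Fintype.card_perm, Fintype.card_fin,
              nsmul_eq_mul]
        _ = ∑ σ : Equiv.Perm (Fin n), ∫ ω, PhiStat n k α (W ω, u ω ∘ σ) ∂P :=
            (Finset.sum_congr rfl fun σ _ => (hkey σ)).symm
        _ = ∫ ω, ∑ σ : Equiv.Perm (Fin n), PhiStat n k α (W ω, u ω ∘ σ) ∂P :=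
            (integral_finset_sum _ fun σ _ => hφint σ).symm
        _ = ∫ _ω, (Nat.factorial n : ℝ) * α ∂P := by
            rw [show (fun ω => ∑ σ : Equiv.Perm (Fin n), PhiStat n k α (W ω, u ω ∘ σ))
              = fun _ => (Nat.factorial n : ℝ) * α from funext hsum]
        _ = (Nat.factorial n : ℝ) * α := by
            rw [integral_const, probReal_univ, smul_eq_mul, one_mul]
    have hint : ∫ ω, PhiStat n k α (W ω, u ω) ∂P = α := mul_left_cancel₀ hfac hNα
    exact hint
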